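/- Let a₁,…,a_n be a sequence of integers with i ≤ a_i ≤ n for all i, and such that if i ≤ j ≤ a_i then a_j ≤ a_i. Define relations on indices {1,…,n} by: i R j iff i<j and a_i<a_j; i S j iff j<i and a_i ≤ a_j. Then (S,R) is a Catalan pair on {1,…,n}. -/

import Mathlib

/-- A Catalan pair on a set `X ⊆ α`: the relations are supported on `X`,
are strict orders, their symmetrizations partition `X² \ diagonal`,
and `S ∘ R ⊆ R`. -/
def IsCatalanPairOn {α : Type*} (X : Set α) (S R : α → α → Prop) : Prop :=
  (∀ a b, S a b → a ∈ X ∧ b ∈ X) ∧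
  (∀ a b, R a b → a ∈ X ∧ b ∈ X) ∧
  (∀ a, ¬ S a a) ∧ (∀ a b c, S a b → S b c → S a c) ∧
  (∀ a, ¬ R a a) ∧ (∀ a b c, R a b → R b c → R a c) ∧
  (∀ a ∈ X, ∀ b ∈ X, a ≠ b → S a b ∨ S b a ∨ R a b ∨ R b a) ∧
  (∀ a b, ¬ ((S a b ∨ S b a) ∧ (R a b ∨ R b a))) ∧
  (∀ a b c, S a b → R b c → R a c)

/-- for a sequence with `i ≤ a i ≤ n` and the monotone-cover
property, the relations `i R j ↔ i<j ∧ a i < a j` and `i S j ↔ j<i ∧ a i ≤ a j`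
form a Catalan pair on `{1,…,n}`. -/
theorem catalanPair_of_sequence (n : ℕ) (a : ℕ → ℤ)
    (hbd : ∀ i ∈ Set.Icc 1 n, (i : ℤ) ≤ a i ∧ a i ≤ n)
    (hcov : ∀ i ∈ Set.Icc 1 n, ∀ j ∈ Set.Icc 1 n, i ≤ j → (j : ℤ) ≤ a i → a j ≤ a i) :
    IsCatalanPairOn (Set.Icc 1 n)
      (fun i j => i ∈ Set.Icc 1 n ∧ j ∈ Set.Icc 1 n ∧ j < i ∧ a i ≤ a j)
      (fun i j => i ∈ Set.Icc 1 n ∧ j ∈ Set.Icc 1 n ∧ i < j ∧ a i < a j) := by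
  refine ⟨fun i j h => ⟨h.1, h.2.1⟩, fun i j h => ⟨h.1, h.2.1⟩,
    fun i h => absurd h.2.2.1 (lt_irrefl _),
    fun i j k hij hjk => ⟨hij.1, hjk.2.1, hjk.2.2.1.trans hij.2.2.1, hij.2.2.2.trans hjk.2.2.2⟩,
    fun i h => absurd h.2.2.1 (lt_irrefl _),
    fun i j k hij hjk => ⟨hij.1, hjk.2.1, hij.2.2.1.trans hjk.2.2.1, hij.2.2.2.trans hjk.2.2.2⟩,
    ?_, ?_, ?_⟩
  · intro i hi j hj hne
    rcases lt_or_gt_of_ne hne with h | h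
    · rcases lt_or_ge (a i) (a j) with h' | h'
      · exact Or.inr (Or.inr (Or.inl ⟨hi, hj, h, h'⟩))
      · exact Or.inr (Or.inl ⟨hj, hi, h, h'⟩)
    · rcases lt_or_ge (a j) (a i) with h' | h'
      · exact Or.inr (Or.inr (Or.inr ⟨hj, hi, h, h'⟩))
      · exact Or.inl ⟨hi, hj, h, h'⟩
  · rintro i j ⟨hS | hS, hR | hR⟩
    · exact absurd (hS.2.2.1.trans hR.2.2.1) (lt_irrefl _)
    · exact absurd (hS.2.2.2.trans_lt hR.2.2.2) (lt_irrefl _)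
    · exact absurd (hS.2.2.2.trans_lt hR.2.2.2) (lt_irrefl _)
    · exact absurd (hS.2.2.1.trans hR.2.2.1) (lt_irrefl _)
  · rintro i j k ⟨hi, hj, hji, hij⟩ ⟨_, hk, hjk, hajk⟩
    refine ⟨hi, hk, ?_, lt_of_le_of_lt hij hajk⟩
    by_contra h
    push_neg at h
    have hik : (k : ℤ) ≤ a j := by
      have := (hbd i hi).1
      have : (k : ℤ) ≤ a i := le_trans (by exact_mod_cast h) ((hbd i hi).1)
      exact this.trans hij
    exact absurd (hcov j hj k hk hjk.le hik) (not_le.mpr hajk)
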